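/- Let T : ℝ → ℝ be twice continuously differentiable with T″(s) ≥ 0 for all s, T′(s) → +∞ and T″(s) → +∞ as s → +∞. Then for all sufficiently large positive integers K, ∫_ℝ e^{(2K+1)s − T(s)} ds ≤ (1/2) e^{T*(2K+1)}, where T*(q) = sup_{s∈ℝ}(qs − T(s)). -/

import Mathlib

open Filter Topology MeasureTheory Set

/-- The integral of `exp (-11 |x - m|)` over `ℝ` equals `2/11`, with integrability. -/
lemma laplace_aux_exp_abs (m : ℝ) :
    Integrable (fun x : ℝ => Real.exp (-11 * |x - m|)) ∧
      (∫ x : ℝ, Real.exp (-11 * |x - m|)) = 2 / 11 := by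
  have hIoi : IntegrableOn (fun x : ℝ => Real.exp (-11 * |x|)) (Ioi 0) := by
    refine (exp_neg_integrableOn_Ioi 0 (by norm_num : (0:ℝ) < 11)).congr_fun
      (fun x hx => ?_) measurableSet_Ioi
    rw [abs_of_pos hx]
  have hint : Integrable (fun x : ℝ => Real.exp (-11 * |x|)) := by
    have hIic : IntegrableOn (fun x : ℝ => Real.exp (-11 * |x|)) (Iic 0) := by
      rw [← Measure.map_neg_eq_self (volume : Measure ℝ)]
      have m : MeasurableEmbedding fun x : ℝ => -x :=
        (Homeomorph.neg ℝ).measurableEmbedding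
      rw [m.integrableOn_map_iff]
      simp_rw [Function.comp_def, abs_neg, neg_preimage, neg_Iic, neg_zero]
      exact (integrableOn_Ici_iff_integrableOn_Ioi).mpr hIoi
    rw [← integrableOn_univ, ← Iic_union_Ioi (a := (0:ℝ))]
    exact hIic.union hIoi
  have hval : (∫ x : ℝ, Real.exp (-11 * |x|)) = 2 / 11 := by
    have h1 : (∫ x : ℝ, Real.exp (-11 * |x|)) =
        2 * ∫ x in Ioi (0:ℝ), Real.exp (-11 * x) :=
      integral_comp_abs (f := fun y => Real.exp (-11 * y))
    have h2 : (∫ x in Ioi (0:ℝ), Real.exp (-11 * x)) = 1 / 11 := by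
      have := integral_comp_mul_left_Ioi (fun y : ℝ => Real.exp (-y)) 0
        (by norm_num : (0:ℝ) < 11)
      simp only [mul_zero, integral_exp_neg_Ioi, neg_zero, Real.exp_zero,
        smul_eq_mul, mul_one] at this
      calc (∫ x in Ioi (0:ℝ), Real.exp (-11 * x))
          = ∫ x in Ioi (0:ℝ), Real.exp (-(11 * x)) := by simp [neg_mul]
        _ = (11:ℝ)⁻¹ := this
        _ = 1 / 11 := by norm_num
    rw [h1, h2]; norm_num
  have key : ∀ x : ℝ, Real.exp (-11 * |x - m|) =
      (fun y : ℝ => Real.exp (-11 * |y|)) (x - m) := fun x => rfl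
  constructor
  · simpa using hint.comp_sub_right m
  · calc (∫ x : ℝ, Real.exp (-11 * |x - m|))
        = ∫ x : ℝ, (fun y : ℝ => Real.exp (-11 * |y|)) (x - m) := rfl
      _ = ∫ x : ℝ, Real.exp (-11 * |x|) :=
          integral_sub_right_eq_self (fun y : ℝ => Real.exp (-11 * |y|)) m
      _ = 2 / 11 := hval

/-- Laplace-method upper bound: if `T` is `C²`, convex, with `T' → ∞` and
`T'' → ∞` at `+∞`, then for all sufficiently large positive integers `K`,
`∫ e^{(2K+1)s - T(s)} ds ≤ (1/2) e^{T*(2K+1)}`. -/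
theorem laplace_upper_bound
    (T : ℝ → ℝ) (hT : ContDiff ℝ 2 T)
    (hconv : ∀ s : ℝ, 0 ≤ deriv (deriv T) s)
    (hT' : Tendsto (deriv T) atTop atTop)
    (hT'' : Tendsto (deriv (deriv T)) atTop atTop) :
    ∃ K₀ : ℕ, 1 ≤ K₀ ∧ ∀ K : ℕ, K₀ ≤ K →
      ∫ s : ℝ, Real.exp ((2 * K + 1) * s - T s)
        ≤ (1 / 2) * Real.exp (⨆ s : ℝ, ((2 * K + 1) * s - T s)) := by
  -- basic regularity
  have h2 : ContDiff ℝ ((1:ℕ) + 1) T := by exact_mod_cast hT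
  rw [contDiff_succ_iff_deriv] at h2
  obtain ⟨hTdiff, -, hg1⟩ := h2
  set g := deriv T with hgdef
  have hgdiff : Differentiable ℝ g := hg1.differentiable (by norm_num)
  have hgcont : Continuous g := hgdiff.continuous
  have hgmono : Monotone g := monotone_of_deriv_nonneg hgdiff hconv
  -- a point beyond which `T'' ≥ 121`
  obtain ⟨s₁, hs₁⟩ := eventually_atTop.mp (hT''.eventually_ge_atTop 121)
  refine ⟨max 1 ⌈g (s₁ + 1)⌉₊, le_max_left _ _, fun K hK => ?_⟩
  set q : ℝ := 2 * K + 1 with hqdef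
  have hqK : g (s₁ + 1) ≤ q := by
    have h1 : g (s₁ + 1) ≤ (⌈g (s₁ + 1)⌉₊ : ℝ) := Nat.le_ceil _
    have h2 : (⌈g (s₁ + 1)⌉₊ : ℝ) ≤ (K : ℝ) := by
      exact_mod_cast le_trans (le_max_right 1 _) hK
    have h3 : (K : ℝ) ≤ q := by
      have : (0:ℝ) ≤ K := Nat.cast_nonneg K
      simp only [hqdef]; linarith
    linarith
  -- find the maximizer `p` with `g p = q`, `p ≥ s₁ + 1`
  obtain ⟨b₀, hb₀⟩ := eventually_atTop.mp (hT'.eventually_ge_atTop q)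
  set b : ℝ := max b₀ (s₁ + 1) with hbdef
  have hab : s₁ + 1 ≤ b := le_max_right _ _
  have hgb : q ≤ g b := hb₀ b (le_max_left _ _)
  obtain ⟨p, hpmem, hgp⟩ := intermediate_value_Icc hab hgcont.continuousOn
    (mem_Icc.mpr ⟨hqK, hgb⟩)
  have hp1 : s₁ + 1 ≤ p := hpmem.1
  -- the function `F` and its maximum `M`
  set F : ℝ → ℝ := fun s => q * s - T s with hFdef
  set M : ℝ := F p with hMdef
  have hFderiv : ∀ s : ℝ, HasDerivAt F (q - g s) s := by
    intro s
    have h1 : HasDerivAt (fun x : ℝ => q * x) (q * 1) s := (hasDerivAt_id s).const_mul q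
    have h2 : HasDerivAt T (g s) s := (hTdiff s).hasDerivAt
    exact (h1.sub h2).congr_deriv (by ring)
  have hFcont : Continuous F := by
    fun_prop
  -- F ≤ M everywhere
  have hFM : ∀ s : ℝ, F s ≤ M := by
    have hmono : MonotoneOn F (Iic p) := by
      refine monotoneOn_of_deriv_nonneg (convex_Iic p) hFcont.continuousOn
        (fun s _ => (hFderiv s).differentiableAt.differentiableWithinAt) (fun s hs => ?_)
      rw [(hFderiv s).deriv]
      rw [interior_Iic] at hs
      have : g s ≤ g p := hgmono hs.le
      rw [hgp] at this; linarith
    have hanti : AntitoneOn F (Ici p) := by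
      refine antitoneOn_of_deriv_nonpos (convex_Ici p) hFcont.continuousOn
        (fun s _ => (hFderiv s).differentiableAt.differentiableWithinAt) (fun s hs => ?_)
      rw [(hFderiv s).deriv]
      rw [interior_Ici] at hs
      have : g p ≤ g s := hgmono hs.le
      rw [hgp] at this; linarith
    intro s
    rcases le_total s p with h | h
    · exact hmono (mem_Iic.mpr h) (mem_Iic.mpr le_rfl) h
    · exact hanti (mem_Ici.mpr le_rfl) (mem_Ici.mpr h) h
  clear_value F M
  -- the derivative grows at rate ≥ 121 beyond s₁
  have hshift : MonotoneOn (fun s => g s - 121 * s) (Ici s₁) := by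
    refine monotoneOn_of_deriv_nonneg (convex_Ici s₁)
      (by fun_prop) (fun s _ => ?_) (fun s hs => ?_)
    · exact (((hgdiff s).hasDerivAt.sub
        (((hasDerivAt_id s).const_mul (121:ℝ)))).differentiableAt).differentiableWithinAt
    · have hd : HasDerivAt (fun s => g s - 121 * s) (deriv g s - 121 * 1) s :=
        (hgdiff s).hasDerivAt.sub ((hasDerivAt_id s).const_mul (121:ℝ))
      rw [hd.deriv]
      rw [interior_Ici] at hs
      have := hs₁ s hs.le
      linarith
  have hps₁ : s₁ ≤ p := by linarith
  have hgR : q + 11 ≤ g (p + 1/11) := by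
    have h0 : g p - 121 * p ≤ g (p + 1/11) - 121 * (p + 1/11) :=
      hshift (mem_Ici.mpr hps₁) (mem_Ici.mpr (by linarith : s₁ ≤ p + 1/11))
        (by linarith : p ≤ p + 1/11)
    rw [hgp] at h0; linarith
  have hgL : g (p - 1/11) ≤ q - 11 := by
    have h0 : g (p - 1/11) - 121 * (p - 1/11) ≤ g p - 121 * p :=
      hshift (mem_Ici.mpr (by linarith : s₁ ≤ p - 1/11)) (mem_Ici.mpr hps₁)
        (by linarith : p - 1/11 ≤ p)
    rw [hgp] at h0; linarith
  -- key pointwise bound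
  have hkey : ∀ s : ℝ, F s ≤ M + 1 - 11 * |s - p| := by
    have hR : AntitoneOn (fun s => F s + 11 * s) (Ici (p + 1/11)) := by
      refine antitoneOn_of_deriv_nonpos (convex_Ici _) (by fun_prop)
        (fun s _ => ((hFderiv s).add
          ((hasDerivAt_id s).const_mul (11:ℝ))).differentiableAt.differentiableWithinAt)
        (fun s hs => ?_)
      have hd : HasDerivAt (fun s => F s + 11 * s) (q - g s + 11 * 1) s :=
        (hFderiv s).add ((hasDerivAt_id s).const_mul (11:ℝ))
      rw [hd.deriv]
      rw [interior_Ici] at hs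
      have : g (p + 1/11) ≤ g s := hgmono hs.le
      linarith
    have hL : MonotoneOn (fun s => F s - 11 * s) (Iic (p - 1/11)) := by
      refine monotoneOn_of_deriv_nonneg (convex_Iic _) (by fun_prop)
        (fun s _ => ((hFderiv s).sub
          ((hasDerivAt_id s).const_mul (11:ℝ))).differentiableAt.differentiableWithinAt)
        (fun s hs => ?_)
      have hd : HasDerivAt (fun s => F s - 11 * s) (q - g s - 11 * 1) s :=
        (hFderiv s).sub ((hasDerivAt_id s).const_mul (11:ℝ))
      rw [hd.deriv]
      rw [interior_Iic] at hs
      have : g s ≤ g (p - 1/11) := hgmono hs.le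
      linarith
    intro s
    rcases le_total s p with h | h
    · rw [abs_of_nonpos (by linarith)]
      rcases le_total s (p - 1/11) with h' | h'
      · have h1 : F s - 11 * s ≤ F (p - 1/11) - 11 * (p - 1/11) :=
          hL (mem_Iic.mpr h') (mem_Iic.mpr le_rfl) h'
        have h2 := hFM (p - 1/11)
        nlinarith [h1, h2]
      · have := hFM s; linarith
    · rw [abs_of_nonneg (by linarith)]
      rcases le_total (p + 1/11) s with h' | h'
      · have h1 : F s + 11 * s ≤ F (p + 1/11) + 11 * (p + 1/11) :=
          hR (mem_Ici.mpr le_rfl) (mem_Ici.mpr h') h'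
        have h2 := hFM (p + 1/11)
        nlinarith [h1, h2]
      · have := hFM s; linarith
  -- the supremum equals M
  have hbdd : BddAbove (Set.range F) := ⟨M, by rintro _ ⟨s, rfl⟩; exact hFM s⟩
  have hsup : (⨆ s : ℝ, F s) = M :=
    le_antisymm (ciSup_le hFM) (hMdef ▸ le_ciSup hbdd p)
  -- conclude via the dominating integrable function
  obtain ⟨hdint, hdval⟩ := laplace_aux_exp_abs p
  have main : (∫ s : ℝ, Real.exp (F s)) ≤ (1/2) * Real.exp (⨆ s : ℝ, F s) := by
    rw [hsup]
    have hcalc : (∫ s : ℝ, Real.exp (F s))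
        ≤ ∫ s : ℝ, Real.exp (M + 1) * Real.exp (-11 * |s - p|) := by
      refine integral_mono_of_nonneg (Filter.Eventually.of_forall fun s => (Real.exp_pos _).le)
        (hdint.const_mul _) (Filter.Eventually.of_forall fun s => ?_)
      show Real.exp (F s) ≤ Real.exp (M + 1) * Real.exp (-11 * |s - p|)
      rw [← Real.exp_add]
      exact Real.exp_le_exp.mpr (by have := hkey s; linarith)
    have hval2 : (∫ s : ℝ, Real.exp (M + 1) * Real.exp (-11 * |s - p|))
        = Real.exp (M + 1) * (2 / 11) := by
      rw [integral_const_mul, hdval]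
    have hfin : Real.exp (M + 1) * (2 / 11) ≤ (1/2) * Real.exp M := by
      rw [Real.exp_add]
      have h1 : Real.exp 1 < 2.7182818286 := Real.exp_one_lt_d9
      have h2 : (0:ℝ) < Real.exp M := Real.exp_pos M
      nlinarith
    calc (∫ s : ℝ, Real.exp (F s))
        ≤ ∫ s : ℝ, Real.exp (M + 1) * Real.exp (-11 * |s - p|) := hcalc
      _ = Real.exp (M + 1) * (2 / 11) := hval2
      _ ≤ (1/2) * Real.exp M := hfin
  simp only [hFdef] at main ⊢
  exact main
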